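/- Let X and Y be compact metric spaces, λ > 0, κ ≥ 0, let c : X × Y → ℝ be continuous and satisfy |c(x, y) − c(x′, y)| ≤ κ · dist(x, x′) for all x, x′ ∈ X and y ∈ Y, and let ν be a Borel probability measure on Y. For a Borel probability measure μ on X, define W(μ) as the supremum over continuous functions ψ : Y → ℝ of ∫_X ψ^{c,λ}(x) dμ(x) + ∫_Y ψ(y) dν(y), where ψ^{c,λ}(x) = −λ · log ∫_Y exp((ψ(y) − c(x, y))/λ) dν(y); this supremum is a finite real number. Then for any measurable space Z with probability measure ζ and any measurable maps g₁, g₂ : Z → X such that z ↦ dist(g₁(z), g₂(z)) is integrable, one has |W(g₁♯ζ) − W(g₂♯ζ)| ≤ κ · ∫_Z dist(g₁(z), g₂(z)) dζ(z). -/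

import Mathlib

open MeasureTheory

/-- Semi-dual formulation of the entropy-regularized optimal transport cost
`OT_c^λ(μ, ν)` : the supremum over continuous dual potentials `ψ : Y → ℝ` of
`∫ ψ^{c,λ} dμ + ∫ ψ dν`, where `ψ^{c,λ}(x) = -λ log ∫ exp((ψ(y) - c(x,y))/λ) dν(y)`. -/
noncomputable def Wreg {X : Type*} [MeasurableSpace X]
    {Y : Type*} [TopologicalSpace Y] [MeasurableSpace Y]
    (lam : ℝ) (c : X × Y → ℝ) (ν : Measure Y) (μ : Measure X) : ℝ :=
  ⨆ ψ : C(Y, ℝ),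
    (∫ x, (-lam * Real.log (∫ y, Real.exp ((ψ y - c (x, y)) / lam) ∂ν)) ∂μ
      + ∫ y, ψ y ∂ν)

/-- A `ciSup` comparison lemma over `ℝ`: if the two families are uniformly `ε`-close,
then the suprema are `ε`-close (with the junk-value convention handled). -/
lemma abs_ciSup_sub_ciSup_le_of_abs_sub_le {ι : Type*} [Nonempty ι] {f g : ι → ℝ} {ε : ℝ}
    (hε : 0 ≤ ε) (h : ∀ i, |f i - g i| ≤ ε) :
    |(⨆ i, f i) - ⨆ i, g i| ≤ ε := by
  have key : ∀ {f g : ι → ℝ}, (∀ i, |f i - g i| ≤ ε) → BddAbove (Set.range f) →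
      BddAbove (Set.range g) := by
    intro f g h ⟨M, hM⟩
    refine ⟨M + ε, ?_⟩
    rintro _ ⟨i, rfl⟩
    have h1 : f i ≤ M := hM ⟨i, rfl⟩
    have h2 := (abs_le.1 (h i)).1
    linarith
  have h' : ∀ i, |g i - f i| ≤ ε := fun i => by rw [abs_sub_comm]; exact h i
  by_cases hf : BddAbove (Set.range f)
  · have hg : BddAbove (Set.range g) := key h hf
    have step : ∀ {f g : ι → ℝ}, (∀ i, |f i - g i| ≤ ε) → BddAbove (Set.range g) →
        (⨆ i, f i) - (⨆ i, g i) ≤ ε := by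
      intro f g h hg
      rw [sub_le_iff_le_add]
      refine ciSup_le fun i => ?_
      have h1 := (abs_le.1 (h i)).2
      have h2 : g i ≤ ⨆ i, g i := le_ciSup hg i
      linarith
    rw [abs_sub_le_iff]
    exact ⟨step h hg, step h' hf⟩
  · have hg : ¬ BddAbove (Set.range g) := fun hg => hf (key h' hg)
    rw [Real.iSup_of_not_bddAbove hf, Real.iSup_of_not_bddAbove hg]
    simpa using hε

theorem Wreg_pushforward_diff_le {X : Type*} [MetricSpace X] [CompactSpace X]
    [MeasurableSpace X] [BorelSpace X]
    {Y : Type*} [MetricSpace Y] [CompactSpace Y] [MeasurableSpace Y] [BorelSpace Y]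
    (lam : ℝ) (hlam : 0 < lam) (κ : ℝ) (hκ : 0 ≤ κ)
    (c : X × Y → ℝ) (hc : Continuous c)
    (hclip : ∀ x x' : X, ∀ y : Y, |c (x, y) - c (x', y)| ≤ κ * dist x x')
    (ν : Measure Y) [IsProbabilityMeasure ν]
    {Z : Type*} [MeasurableSpace Z] (ζ : Measure Z) [IsProbabilityMeasure ζ]
    (g₁ g₂ : Z → X) (hg₁ : Measurable g₁) (hg₂ : Measurable g₂)
    (hint : Integrable (fun z => dist (g₁ z) (g₂ z)) ζ) :
    |Wreg lam c ν (Measure.map g₁ ζ) - Wreg lam c ν (Measure.map g₂ ζ)| ≤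
      κ * ∫ z, dist (g₁ z) (g₂ z) ∂ζ := by
  -- The integral inside the log
  set I : C(Y, ℝ) → X → ℝ :=
    fun ψ x => ∫ y, Real.exp ((ψ y - c (x, y)) / lam) ∂ν with hI
  -- The (c,λ)-transform
  set φ : C(Y, ℝ) → X → ℝ := fun ψ x => -lam * Real.log (I ψ x) with hφ
  -- integrand continuity and integrability
  have hcont : ∀ (ψ : C(Y, ℝ)) (x : X),
      Continuous fun y => Real.exp ((ψ y - c (x, y)) / lam) := fun ψ x =>
    ((ψ.continuous.sub (hc.comp (Continuous.prodMk_right x))).div_const lam).rexp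
  have hinteg : ∀ (ψ : C(Y, ℝ)) (x : X),
      Integrable (fun y => Real.exp ((ψ y - c (x, y)) / lam)) ν := fun ψ x =>
    (hcont ψ x).integrable_of_hasCompactSupport (HasCompactSupport.of_compactSpace _)
  have hY : Nonempty Y := MeasureTheory.Measure.nonempty_of_neZero ν
  have hZ : Nonempty Z := MeasureTheory.Measure.nonempty_of_neZero ζ
  have hX : Nonempty X := ⟨g₁ (Classical.arbitrary Z)⟩
  -- positivity of I
  have hIpos : ∀ (ψ : C(Y, ℝ)) (x : X), 0 < I ψ x := by
    intro ψ x
    obtain ⟨y₀, -, hy₀⟩ := IsCompact.exists_isMinOn isCompact_univ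
      ⟨Classical.arbitrary Y, Set.mem_univ _⟩ (hcont ψ x).continuousOn
    have : (Real.exp ((ψ y₀ - c (x, y₀)) / lam)) ≤ I ψ x := by
      have := integral_mono (integrable_const _) (hinteg ψ x)
        (fun y => hy₀ (Set.mem_univ y))
      simpa using this
    exact lt_of_lt_of_le (Real.exp_pos _) this
  -- key Lipschitz estimate for φ ψ
  have hIle : ∀ (ψ : C(Y, ℝ)) (x x' : X),
      I ψ x ≤ Real.exp (κ * dist x x' / lam) * I ψ x' := by
    intro ψ x x'
    have hpt : ∀ y, Real.exp ((ψ y - c (x, y)) / lam) ≤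
        Real.exp (κ * dist x x' / lam) * Real.exp ((ψ y - c (x', y)) / lam) := by
      intro y
      rw [← Real.exp_add, Real.exp_le_exp]
      have h1 := (abs_le.1 (hclip x' x y)).2
      have h2 : c (x', y) - c (x, y) ≤ κ * dist x x' := by
        rw [dist_comm]; exact h1
      rw [← add_div, div_le_div_iff₀ hlam hlam]
      exact mul_le_mul_of_nonneg_right (by linarith) hlam.le
    calc I ψ x ≤ ∫ y, Real.exp (κ * dist x x' / lam) *
          Real.exp ((ψ y - c (x', y)) / lam) ∂ν :=
        integral_mono (hinteg ψ x) ((hinteg ψ x').const_mul _) hpt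
      _ = Real.exp (κ * dist x x' / lam) * I ψ x' := integral_const_mul _ _
  have hlip : ∀ (ψ : C(Y, ℝ)) (x x' : X), |φ ψ x - φ ψ x'| ≤ κ * dist x x' := by
    intro ψ x x'
    have key : ∀ x x' : X, φ ψ x' - φ ψ x ≤ κ * dist x x' := by
      intro x x'
      have h1 : Real.log (I ψ x) ≤ κ * dist x x' / lam + Real.log (I ψ x') := by
        have := Real.log_le_log (hIpos ψ x) (hIle ψ x x')
        rwa [Real.log_mul (Real.exp_ne_zero _) (hIpos ψ x').ne', Real.log_exp] at this
      have h2 : lam * Real.log (I ψ x) ≤ κ * dist x x' + lam * Real.log (I ψ x') := by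
        have := mul_le_mul_of_nonneg_left h1 hlam.le
        rw [mul_add, mul_div_cancel₀ _ hlam.ne'] at this
        linarith
      simp only [hφ]
      linarith
    rw [abs_sub_le_iff]
    constructor
    · have := key x' x; rw [dist_comm] at this; linarith
    · exact key x x'
  -- continuity of φ ψ
  have hφcont : ∀ ψ : C(Y, ℝ), Continuous (φ ψ) := by
    intro ψ
    rcases eq_or_lt_of_le hκ with hκ0 | hκ0
    · have : ∀ x x' : X, φ ψ x = φ ψ x' := by
        intro x x'
        have := hlip ψ x x'
        rw [← hκ0, zero_mul] at this
        have := abs_le.1 this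
        linarith [this.1, this.2]
      have := this
      exact continuous_const.congr fun x => (this (Classical.arbitrary X) x)
    · have : LipschitzWith ⟨κ, hκ⟩ (φ ψ) := by
        apply LipschitzWith.of_dist_le_mul
        intro x x'
        rw [Real.dist_eq]
        exact hlip ψ x x'
      exact this.continuous
  -- bound on each dual value difference
  have hbound : ∀ ψ : C(Y, ℝ),
      |(∫ x, φ ψ x ∂(Measure.map g₁ ζ) + ∫ y, ψ y ∂ν)
        - (∫ x, φ ψ x ∂(Measure.map g₂ ζ) + ∫ y, ψ y ∂ν)| ≤
        κ * ∫ z, dist (g₁ z) (g₂ z) ∂ζ := by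
    intro ψ
    have hmap1 : ∫ x, φ ψ x ∂(Measure.map g₁ ζ) = ∫ z, φ ψ (g₁ z) ∂ζ :=
      integral_map hg₁.aemeasurable (hφcont ψ).aestronglyMeasurable
    have hmap2 : ∫ x, φ ψ x ∂(Measure.map g₂ ζ) = ∫ z, φ ψ (g₂ z) ∂ζ :=
      integral_map hg₂.aemeasurable (hφcont ψ).aestronglyMeasurable
    -- integrability of compositions
    obtain ⟨C, hC⟩ : ∃ C, ∀ x : X, |φ ψ x| ≤ C := by
      obtain ⟨x₀, -, hx₀⟩ := IsCompact.exists_isMaxOn isCompact_univ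
        ⟨Classical.arbitrary X, Set.mem_univ _⟩ ((hφcont ψ).abs.continuousOn)
      exact ⟨|φ ψ x₀|, fun x => hx₀ (Set.mem_univ x)⟩
    have hint1 : Integrable (fun z => φ ψ (g₁ z)) ζ :=
      Integrable.mono' (integrable_const C)
        (((hφcont ψ).measurable.comp hg₁).aestronglyMeasurable)
        (Filter.Eventually.of_forall fun z => by
          simpa [Real.norm_eq_abs] using hC (g₁ z))
    have hint2 : Integrable (fun z => φ ψ (g₂ z)) ζ :=
      Integrable.mono' (integrable_const C)
        (((hφcont ψ).measurable.comp hg₂).aestronglyMeasurable)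
        (Filter.Eventually.of_forall fun z => by
          simpa [Real.norm_eq_abs] using hC (g₂ z))
    rw [add_sub_add_right_eq_sub, hmap1, hmap2, ← integral_sub hint1 hint2]
    calc |∫ z, (φ ψ (g₁ z) - φ ψ (g₂ z)) ∂ζ|
        ≤ ∫ z, |φ ψ (g₁ z) - φ ψ (g₂ z)| ∂ζ := by
          simpa [Real.norm_eq_abs] using
            norm_integral_le_integral_norm (fun z => φ ψ (g₁ z) - φ ψ (g₂ z))
      _ ≤ ∫ z, κ * dist (g₁ z) (g₂ z) ∂ζ :=
          integral_mono (hint1.sub hint2).abs (hint.const_mul κ)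
            (fun z => hlip ψ (g₁ z) (g₂ z))
      _ = κ * ∫ z, dist (g₁ z) (g₂ z) ∂ζ := integral_const_mul _ _
  have hε : 0 ≤ κ * ∫ z, dist (g₁ z) (g₂ z) ∂ζ :=
    mul_nonneg hκ (integral_nonneg fun z => dist_nonneg)
  exact abs_ciSup_sub_ciSup_le_of_abs_sub_le hε hbound
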